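/- arXiv:1307.2054 — 4 statements merged into one kernel-verified Lean document; each statement's English description precedes it below -/
import Mathlib

section
/- Let G be a finite group, let A be a finite G-set, and let H be a subgroup of G. For a subgroup K ≤ G, let c_K(A) denote the number of G-orbits of A containing a point whose stabilizer is exactly K. Let μ denote the Möbius function of the lattice of subgroups of G (ordered by inclusion). Then c_H(A) · [N_G(H) : H] = Σ_{K ≤ G} μ(H, K) · |A^K|, where the sum is over all subgroups K of G, A^K is the K-fixed-point set of A, and N_G(H) is the normalizer of H in G. -/
/-- `orbitTypeCount G A K` is the number of `G`-orbits of `A` containing a point whose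
stabilizer is exactly `K`. -/
noncomputable def orbitTypeCount (G : Type*) [Group G] (A : Type*) [MulAction G A]
    (K : Subgroup G) : ℕ :=
  Nat.card {ω : MulAction.orbitRel.Quotient G A //
    ∃ a ∈ ω.orbit, MulAction.stabilizer G a = K}

section Aux

variable {G : Type*} [Group G] {A : Type*} [MulAction G A]

lemma stabilizer_smul_eq_iff_mem_normalizer {H : Subgroup G} {a₀ : A}
    (h : MulAction.stabilizer G a₀ = H) (g : G) :
    MulAction.stabilizer G (g • a₀) = H ↔ g ∈ Subgroup.normalizer (H : Set G) := by
  have key : ∀ x : G, x ∈ MulAction.stabilizer G (g • a₀) ↔ g⁻¹ * x * g ∈ H := by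
    intro x
    rw [show H = MulAction.stabilizer G a₀ from h.symm]
    simp only [MulAction.mem_stabilizer_iff, mul_smul, inv_smul_eq_iff]
  constructor
  · intro hs
    rw [Subgroup.mem_normalizer_iff'']
    intro x
    conv_lhs => rw [← hs]
    exact key x
  · intro hn
    ext x
    rw [key x]
    exact (Subgroup.mem_normalizer_iff''.mp hn x).symm

lemma card_fiber_eq_relindex {H : Subgroup G} {a₀ : A} (h : MulAction.stabilizer G a₀ = H) :
    Nat.card {a : A // MulAction.stabilizer G a = H ∧
      (Quotient.mk'' a : MulAction.orbitRel.Quotient G A) = Quotient.mk'' a₀}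
      = H.relIndex (Subgroup.normalizer (H : Set G)) := by
  set N := Subgroup.normalizer (H : Set G) with hN
  have hf : ∀ n : ↥N, MulAction.stabilizer G ((n : G) • a₀) = H :=
    fun n => (stabilizer_smul_eq_iff_mem_normalizer h (n : G)).mpr n.2
  let f : ↥N → {a : A // MulAction.stabilizer G a = H ∧
      (Quotient.mk'' a : MulAction.orbitRel.Quotient G A) = Quotient.mk'' a₀} :=
    fun n => ⟨(n : G) • a₀, hf n,
      Quotient.sound' ((MulAction.orbitRel_apply).mpr (MulAction.mem_orbit a₀ (n : G)))⟩
  have wd : ∀ (n m : ↥N), @Setoid.r _ (QuotientGroup.leftRel (H.subgroupOf N)) n m →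
      f n = f m := by
    intro n m hr
    have hmem0 : (n⁻¹ * m) ∈ H.subgroupOf N := QuotientGroup.leftRel_apply.mp hr
    have hmem : ((n : G)⁻¹ * (m : G)) ∈ H := by
      simpa [Subgroup.mem_subgroupOf] using hmem0
    apply Subtype.ext
    show (n : G) • a₀ = (m : G) • a₀
    have : ((n : G)⁻¹ * (m : G)) • a₀ = a₀ := by
      rw [← h] at hmem; exact hmem
    rw [mul_smul, inv_smul_eq_iff] at this
    exact this.symm
  let φ : (N ⧸ H.subgroupOf N) → {a : A // MulAction.stabilizer G a = H ∧
      (Quotient.mk'' a : MulAction.orbitRel.Quotient G A) = Quotient.mk'' a₀} :=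
    fun q => Quotient.liftOn' q f wd
  have hbij : Function.Bijective φ := by
    constructor
    · intro q q'
      induction q using Quotient.inductionOn'
      induction q' using Quotient.inductionOn'
      rename_i n m
      intro hfe
      have : (n : G) • a₀ = (m : G) • a₀ := congrArg Subtype.val hfe
      apply Quotient.sound'
      rw [QuotientGroup.leftRel_apply, Subgroup.mem_subgroupOf]
      have hsm : ((n : G)⁻¹ * (m : G)) • a₀ = a₀ := by
        rw [mul_smul, inv_smul_eq_iff]; exact this.symm
      have hmem : ((n : G)⁻¹ * (m : G)) ∈ MulAction.stabilizer G a₀ := hsm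
      rw [h] at hmem
      simpa using hmem
    · rintro ⟨a, ha1, ha2⟩
      have hrel : a ∈ MulAction.orbit G a₀ :=
        (MulAction.orbitRel_apply).mp (Quotient.eq''.mp ha2)
      obtain ⟨g, hg⟩ := MulAction.mem_orbit_iff.mp hrel
      have hgN : g ∈ N :=
        (stabilizer_smul_eq_iff_mem_normalizer h g).mp (by rw [hg]; exact ha1)
      exact ⟨Quotient.mk'' ⟨g, hgN⟩, Subtype.ext hg⟩
  have hrel : H.relIndex N = Nat.card (N ⧸ H.subgroupOf N) := rfl
  rw [hrel]
  exact (Nat.card_congr (Equiv.ofBijective φ hbij)).symm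

lemma mem_fixedPoints_iff_le_stabilizer (K : Subgroup G) (a : A) :
    a ∈ MulAction.fixedPoints K A ↔ K ≤ MulAction.stabilizer G a := by
  rw [MulAction.mem_fixedPoints]
  constructor
  · intro hfp g hg
    exact hfp ⟨g, hg⟩
  · intro hle m
    exact hle m.2

lemma card_stabilizer_eq_orbitTypeCount_mul [Fintype A] (H : Subgroup G) :
    Nat.card {a : A // MulAction.stabilizer G a = H}
      = orbitTypeCount G A H * H.relIndex (Subgroup.normalizer (H : Set G)) := by
  classical
  set Q := MulAction.orbitRel.Quotient G A with hQ
  set T := {ω : Q // ∃ a ∈ ω.orbit, MulAction.stabilizer G a = H} with hT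
  let F : {a : A // MulAction.stabilizer G a = H} → T :=
    fun a => ⟨Quotient.mk'' a.1, ⟨a.1, MulAction.orbitRel.Quotient.mem_orbit.mpr rfl, a.2⟩⟩
  have hfib : ∀ ω : T, Nat.card {x : {a : A // MulAction.stabilizer G a = H} // F x = ω}
      = H.relIndex (Subgroup.normalizer (H : Set G)) := by
    intro ω
    obtain ⟨a₀, ha₀, hs⟩ := ω.2
    have hmk : (Quotient.mk'' a₀ : Q) = ω.1 := MulAction.orbitRel.Quotient.mem_orbit.mp ha₀
    rw [← card_fiber_eq_relindex hs]
    apply Nat.card_congr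
    exact
      { toFun := fun x => ⟨x.1.1, x.1.2, by rw [hmk]; exact congrArg Subtype.val x.2⟩
        invFun := fun y => ⟨⟨y.1, y.2.1⟩, Subtype.ext (y.2.2.trans hmk)⟩
        left_inv := fun x => Subtype.ext (Subtype.ext rfl)
        right_inv := fun y => Subtype.ext rfl }
  haveI : Finite Q := Quotient.finite _
  haveI : Fintype T := Fintype.ofFinite T
  haveI : Fintype {a : A // MulAction.stabilizer G a = H} := Fintype.ofFinite _
  haveI : ∀ ω : T, Fintype {x : {a : A // MulAction.stabilizer G a = H} // F x = ω} :=
    fun ω => Fintype.ofFinite _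
  calc Nat.card {a : A // MulAction.stabilizer G a = H}
      = Nat.card (Σ ω : T, {x : {a : A // MulAction.stabilizer G a = H} // F x = ω}) :=
        Nat.card_congr (Equiv.sigmaFiberEquiv F).symm
    _ = ∑ ω : T, Nat.card {x : {a : A // MulAction.stabilizer G a = H} // F x = ω} := by
        rw [Nat.card_eq_fintype_card, Fintype.card_sigma]
        exact Finset.sum_congr rfl fun ω _ => (Nat.card_eq_fintype_card).symm
    _ = ∑ _ω : T, H.relIndex (Subgroup.normalizer (H : Set G)) := Finset.sum_congr rfl fun ω _ => hfib ω
    _ = Nat.card T * H.relIndex (Subgroup.normalizer (H : Set G)) := by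
        rw [Finset.sum_const, smul_eq_mul, Finset.card_univ, Nat.card_eq_fintype_card]
    _ = orbitTypeCount G A H * H.relIndex (Subgroup.normalizer (H : Set G)) := rfl

end Aux

/-- Möbius inversion on the subgroup lattice: for a finite group `G`, a finite `G`-set `A`
and a subgroup `H ≤ G`, if `μ` is the Möbius function of the poset of subgroups of `G`
(characterized by `μ(H,H) = 1`, `μ(H,K) = 0` unless `H ≤ K`, and
`Σ_{H ≤ L ≤ K} μ(H,L) = 0` for `H < K`), then
`c_H(A) · [N_G(H) : H] = Σ_K μ(H,K) · |A^K|`, the sum over all subgroups `K` of `G`. -/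
theorem orbitTypeCount_mul_relindex_eq_moebius_sum (G : Type*) [Group G] [Fintype G]
    (A : Type*) [MulAction G A] [Fintype A] (H : Subgroup G)
    (μ : Subgroup G → Subgroup G → ℤ)
    (hμ_refl : ∀ K : Subgroup G, μ K K = 1)
    (hμ_not_le : ∀ K L : Subgroup G, ¬ K ≤ L → μ K L = 0)
    (hμ_sum : ∀ K L : Subgroup G, K < L → (∑ᶠ M ∈ Set.Icc K L, μ K M) = 0) :
    (orbitTypeCount G A H : ℤ) * (H.relIndex (Subgroup.normalizer (H : Set G)) : ℤ) =
      ∑ᶠ K : Subgroup G, μ H K * (Nat.card (MulAction.fixedPoints K A) : ℤ) := by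
  classical
  haveI : Fintype (Subgroup G) := Fintype.ofFinite _
  set n : Subgroup G → ℕ := fun L => (Finset.univ.filter
    (fun a : A => MulAction.stabilizer G a = L)).card with hn
  have hn_card : ∀ L : Subgroup G,
      Nat.card {a : A // MulAction.stabilizer G a = L} = n L := by
    intro L
    rw [Nat.card_eq_fintype_card, Fintype.card_subtype]
  have hfix : ∀ K : Subgroup G, Nat.card (MulAction.fixedPoints K A)
      = ∑ L ∈ Finset.univ.filter (fun L => K ≤ L), n L := by
    intro K
    have e1 : Nat.card (MulAction.fixedPoints K A)
        = Nat.card {a : A // K ≤ MulAction.stabilizer G a} :=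
      Nat.card_congr (Equiv.subtypeEquivRight (mem_fixedPoints_iff_le_stabilizer K))
    rw [e1, Nat.card_eq_fintype_card, Fintype.card_subtype]
    rw [Finset.card_eq_sum_card_fiberwise
      (f := fun a : A => MulAction.stabilizer G a)
      (t := Finset.univ.filter (fun L => K ≤ L))
      (fun a ha => Finset.mem_filter.mpr ⟨Finset.mem_univ _, (Finset.mem_filter.mp ha).2⟩)]
    refine Finset.sum_congr rfl fun L hL => ?_
    have hKL : K ≤ L := (Finset.mem_filter.mp hL).2
    congr 1
    ext a
    simp only [Finset.mem_filter, Finset.mem_univ, true_and]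
    exact ⟨fun hp => hp.2, fun hp => ⟨hp ▸ hKL, hp⟩⟩
  have key : ∀ L : Subgroup G,
      (∑ K ∈ Finset.univ.filter (fun K => K ≤ L), μ H K) = if L = H then 1 else 0 := by
    intro L
    by_cases hLH : L = H
    · rw [if_pos hLH]
      have h1 : ∀ K ∈ Finset.univ.filter (fun K : Subgroup G => K ≤ L), K ≠ H → μ H K = 0 := by
        intro K hK hne
        exact hμ_not_le H K fun hHK =>
          hne (le_antisymm ((Finset.mem_filter.mp hK).2.trans hLH.le) hHK)
      have hmemH : H ∈ Finset.univ.filter (fun K : Subgroup G => K ≤ L) := by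
        simp only [Finset.mem_filter]
        exact ⟨Finset.mem_univ H, hLH.ge⟩
      rw [Finset.sum_eq_single_of_mem H hmemH h1, hμ_refl H]
    · rw [if_neg hLH]
      by_cases hHL : H ≤ L
      · have hlt : H < L := lt_of_le_of_ne hHL (Ne.symm hLH)
        have h0 := hμ_sum H L hlt
        have hIcc : Set.Icc H L
            = ↑(Finset.univ.filter (fun M : Subgroup G => H ≤ M ∧ M ≤ L)) := by
          ext M
          simp [Set.mem_Icc]
        rw [hIcc, finsum_mem_coe_finset] at h0
        rw [← h0]
        refine (Finset.sum_subset ?_ ?_).symm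
        · intro x hx
          exact Finset.mem_filter.mpr ⟨Finset.mem_univ _, (Finset.mem_filter.mp hx).2.2⟩
        · intro x hx hnx
          refine hμ_not_le H x fun hHx => hnx ?_
          exact Finset.mem_filter.mpr ⟨Finset.mem_univ _, hHx, (Finset.mem_filter.mp hx).2⟩
      · refine Finset.sum_eq_zero fun K hK => ?_
        exact hμ_not_le H K fun hHK => hHL (hHK.trans (Finset.mem_filter.mp hK).2)
  rw [finsum_eq_sum_of_fintype]
  have rhs : (∑ K : Subgroup G, μ H K * (Nat.card (MulAction.fixedPoints K A) : ℤ))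
      = (n H : ℤ) := by
    calc (∑ K : Subgroup G, μ H K * (Nat.card (MulAction.fixedPoints K A) : ℤ))
        = ∑ K : Subgroup G, ∑ L ∈ Finset.univ.filter (fun L => K ≤ L),
            μ H K * (n L : ℤ) := by
          refine Finset.sum_congr rfl fun K _ => ?_
          rw [hfix K]
          push_cast
          rw [Finset.mul_sum]
      _ = ∑ K : Subgroup G, ∑ L : Subgroup G,
            if K ≤ L then μ H K * (n L : ℤ) else 0 := by
          refine Finset.sum_congr rfl fun K _ => ?_
          rw [Finset.sum_filter]
      _ = ∑ L : Subgroup G, ∑ K : Subgroup G,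
            if K ≤ L then μ H K * (n L : ℤ) else 0 := Finset.sum_comm
      _ = ∑ L : Subgroup G,
            (∑ K ∈ Finset.univ.filter (fun K => K ≤ L), μ H K) * (n L : ℤ) := by
          refine Finset.sum_congr rfl fun L _ => ?_
          rw [Finset.sum_mul, Finset.sum_filter]
      _ = ∑ L : Subgroup G, (if L = H then 1 else 0) * (n L : ℤ) := by
          refine Finset.sum_congr rfl fun L _ => ?_
          rw [key L]
      _ = (n H : ℤ) := by
          simp [ite_mul, Finset.sum_ite_eq']
  rw [rhs, ← hn_card H, card_stabilizer_eq_orbitTypeCount_mul H]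
  push_cast
  ring
end

section
/- Let G be a finite cyclic group and let A, B be finite G-sets. If for every element g ∈ G the number of points of A fixed by g equals the number of points of B fixed by g (i.e., |{a ∈ A : ga = a}| = |{b ∈ B : gb = b}| for all g ∈ G), then A and B are isomorphic as G-sets. Consequently, for cyclic G, two finite G-sets whose associated permutation representations (the spaces of functions on the sets) are isomorphic are themselves isomorphic. -/
open MulAction

section Helpers

variable {G : Type*} [Group G]

/-- An equivariant bijection induces equality of fixed-point counts. -/
theorem fixCard_congr {A B : Type*} [MulAction G A] [MulAction G B]
    (e : A ≃ B) (he : ∀ (g : G) (a : A), e (g • a) = g • e a) (g : G) :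
    Nat.card {a : A | g • a = a} = Nat.card {b : B | g • b = b} := by
  refine Nat.card_congr (e.subtypeEquiv fun a => ?_)
  simp only [Set.mem_setOf_eq]
  constructor
  · intro ha; rw [← he]; exact congrArg e ha
  · intro hb; apply e.injective; rw [he]; exact hb

/-- The orbit of a point, as a `SubMulAction`. -/
def orbitSub (G : Type*) [Group G] {A : Type*} [MulAction G A] (a : A) : SubMulAction G A where
  carrier := orbit G a
  smul_mem' := fun c {x} hx => by
    obtain ⟨g, hg⟩ := hx
    exact ⟨c * g, by rw [← hg]; exact mul_smul c g a⟩

theorem mem_orbitSub {A : Type*} [MulAction G A] {a x : A} :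
    x ∈ orbitSub G a ↔ x ∈ orbit G a := Iff.rfl

/-- Complement of a `SubMulAction`. -/
def complSub {A : Type*} [MulAction G A] (p : SubMulAction G A) : SubMulAction G A where
  carrier := (p : Set A)ᶜ
  smul_mem' := fun c {x} hx hc => by
    have : (c⁻¹ • (c • x)) ∈ p := p.smul_mem' c⁻¹ hc
    rw [inv_smul_smul] at this
    exact hx this

theorem mem_complSub {A : Type*} [MulAction G A] {p : SubMulAction G A} {x : A} :
    x ∈ complSub p ↔ ¬ x ∈ p := Iff.rfl

/-- Fixed-point counts split along a sub-mul-action and its complement. -/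
theorem card_fix_split {A : Type*} [MulAction G A] [Fintype A] (p : SubMulAction G A) (g : G) :
    Nat.card {x : A | g • x = x} =
      Nat.card {x : ↥p | g • x = x} + Nat.card {x : ↥(complSub p) | g • x = x} := by
  classical
  have E : {x : A // g • x = x} ≃
      {x : ↥p // g • x = x} ⊕ {x : ↥(complSub p) // g • x = x} :=
    { toFun := fun x =>
        if h : x.1 ∈ p then Sum.inl ⟨⟨x.1, h⟩, Subtype.ext x.2⟩
        else Sum.inr ⟨⟨x.1, h⟩, Subtype.ext x.2⟩
      invFun := Sum.elim (fun y => ⟨y.1.1, congrArg Subtype.val y.2⟩)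
        (fun y => ⟨y.1.1, congrArg Subtype.val y.2⟩)
      left_inv := fun x => by by_cases h : x.1 ∈ p <;> simp [h]
      right_inv := fun y => by
        rcases y with ⟨⟨v, hv⟩, hy⟩ | ⟨⟨v, hv⟩, hy⟩
        · simp [hv]
        · simp [show ¬ v ∈ p from hv] }
  rw [show {x : A | g • x = x} = {x : A | g • x = x} from rfl]
  calc Nat.card {x : A | g • x = x}
      = Nat.card ({x : ↥p // g • x = x} ⊕ {x : ↥(complSub p) // g • x = x}) :=
        Nat.card_congr E
    _ = _ := Nat.card_sum

/-- Two points with equal stabilizers have equivariantly bijective orbits. -/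
theorem orbit_equiv {A B : Type*} [MulAction G A] [MulAction G B] (a : A) (b : B)
    (hab : stabilizer G a = stabilizer G b) :
    ∃ e : ↥(orbitSub G a) ≃ ↥(orbitSub G b),
      ∀ (g : G) (x : ↥(orbitSub G a)), e (g • x) = g • e x := by
  classical
  have key : ∀ g g' : G, g • a = g' • a → g • b = g' • b := by
    intro g g' hg
    have h1 : g'⁻¹ * g ∈ stabilizer G a := by
      rw [mem_stabilizer_iff, mul_smul, hg, inv_smul_smul]
    rw [hab, mem_stabilizer_iff, mul_smul] at h1
    calc g • b = g' • ((g'⁻¹ * g) • b) := by rw [mul_smul, smul_inv_smul]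
    _ = g' • b := by rw [mul_smul, h1]
  have keysymm : ∀ g g' : G, g • b = g' • b → g • a = g' • a := by
    intro g g' hg
    have h1 : g'⁻¹ * g ∈ stabilizer G b := by
      rw [mem_stabilizer_iff, mul_smul, hg, inv_smul_smul]
    rw [← hab, mem_stabilizer_iff, mul_smul] at h1
    calc g • a = g' • ((g'⁻¹ * g) • a) := by rw [mul_smul, smul_inv_smul]
    _ = g' • a := by rw [mul_smul, h1]
  -- choice of a group element representing each orbit point
  have mem' : ∀ x : ↥(orbitSub G a), ∃ g : G, g • a = x.1 := fun x => x.2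
  let c : ↥(orbitSub G a) → G := fun x => (mem' x).choose
  have hc : ∀ x, c x • a = x.1 := fun x => (mem' x).choose_spec
  let f : ↥(orbitSub G a) → ↥(orbitSub G b) := fun x => ⟨c x • b, mem_orbit b (c x)⟩
  have hf : ∀ (x : ↥(orbitSub G a)) (g : G), g • a = x.1 → (f x).1 = g • b := by
    intro x g hg
    exact key (c x) g (by rw [hc x, hg])
  have hinj : Function.Injective f := by
    intro x y hxy
    have h1 : c x • b = c y • b := congrArg Subtype.val hxy
    have h2 : c x • a = c y • a := keysymm _ _ h1
    exact Subtype.ext (by rw [← hc x, ← hc y, h2])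
  have hsurj : Function.Surjective f := by
    intro y
    obtain ⟨g, hg⟩ := y.2
    refine ⟨⟨g • a, mem_orbit a g⟩, Subtype.ext ?_⟩
    rw [hf ⟨g • a, mem_orbit a g⟩ g rfl]
    exact hg
  refine ⟨Equiv.ofBijective f ⟨hinj, hsurj⟩, ?_⟩
  intro g x
  change f (g • x) = g • f x
  refine Subtype.ext ?_
  have h1 : (f (g • x)).1 = (g * c x) • b := by
    refine hf _ _ ?_
    rw [mul_smul, hc x]
    rfl
  rw [h1]
  rw [mul_smul]
  rfl

/-- Glue equivariant bijections on a sub-action and its complement. -/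
theorem glue_equiv {A B : Type*} [MulAction G A] [MulAction G B]
    (p : SubMulAction G A) (q : SubMulAction G B)
    (eo : ↥p ≃ ↥q) (heo : ∀ (g : G) (x : ↥p), eo (g • x) = g • eo x)
    (ec : ↥(complSub p) ≃ ↥(complSub q))
    (hec : ∀ (g : G) (x : ↥(complSub p)), ec (g • x) = g • ec x) :
    ∃ e : A ≃ B, ∀ (g : G) (a : A), e (g • a) = g • e a := by
  classical
  let f : A → B := fun a => if h : a ∈ p then (eo ⟨a, h⟩).1 else (ec ⟨a, h⟩).1
  have hfp : ∀ (a : A) (h : a ∈ p), f a = (eo ⟨a, h⟩).1 := fun a h => dif_pos h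
  have hfc : ∀ (a : A) (h : ¬ a ∈ p), f a = (ec ⟨a, h⟩).1 := fun a h => dif_neg h
  have hinj : Function.Injective f := by
    intro x y hxy
    by_cases hx : x ∈ p <;> by_cases hy : y ∈ p
    · rw [hfp x hx, hfp y hy] at hxy
      have := eo.injective (Subtype.ext hxy)
      exact congrArg Subtype.val this
    · rw [hfp x hx, hfc y hy] at hxy
      exact absurd (hxy ▸ (eo ⟨x, hx⟩).2) (ec ⟨y, hy⟩).2
    · rw [hfc x hx, hfp y hy] at hxy
      exact absurd (hxy ▸ (eo ⟨y, hy⟩).2) ((hxy ▸ (ec ⟨x, hx⟩).2 : _))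
    · rw [hfc x hx, hfc y hy] at hxy
      have := ec.injective (Subtype.ext hxy)
      exact congrArg Subtype.val this
  have hsurj : Function.Surjective f := by
    intro b
    by_cases hb : b ∈ q
    · refine ⟨(eo.symm ⟨b, hb⟩).1, ?_⟩
      rw [hfp _ (eo.symm ⟨b, hb⟩).2]
      have : (⟨(eo.symm ⟨b, hb⟩).1, (eo.symm ⟨b, hb⟩).2⟩ : ↥p) = eo.symm ⟨b, hb⟩ := rfl
      rw [this, eo.apply_symm_apply]
    · refine ⟨(ec.symm ⟨b, hb⟩).1, ?_⟩
      have hmem : ¬ (ec.symm ⟨b, hb⟩).1 ∈ p := (ec.symm ⟨b, hb⟩).2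
      rw [hfc _ hmem]
      have : (⟨(ec.symm ⟨b, hb⟩).1, hmem⟩ : ↥(complSub p)) = ec.symm ⟨b, hb⟩ := rfl
      rw [this, ec.apply_symm_apply]
  refine ⟨Equiv.ofBijective f ⟨hinj, hsurj⟩, ?_⟩
  intro g a
  change f (g • a) = g • f a
  by_cases h : a ∈ p
  · have h2 : g • a ∈ p := p.smul_mem' g h
    rw [hfp _ h2, hfp _ h]
    have : (⟨g • a, h2⟩ : ↥p) = g • ⟨a, h⟩ := rfl
    rw [this, heo]
    rfl
  · have h2 : ¬ g • a ∈ p := (complSub p).smul_mem' g h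
    rw [hfc _ h2, hfc _ h]
    have : (⟨g • a, h2⟩ : ↥(complSub p)) = g • ⟨a, h⟩ := rfl
    rw [this, hec]
    rfl

theorem gen_fix_iff {G : Type*} [Group G] (H : Subgroup G) (γ : H)
    (hγ : ∀ x : H, x ∈ Subgroup.zpowers γ) {X : Type*} [MulAction G X] (x : X) :
    γ.1 • x = x ↔ H ≤ MulAction.stabilizer G x := by
  constructor
  · intro hx k hk
    obtain ⟨m, hm⟩ := hγ ⟨k, hk⟩
    have hcoe : (γ.1 : G) ^ m = k := by
      have := congrArg Subtype.val hm
      simpa using this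
    have hmem : γ.1 ∈ MulAction.stabilizer G x := hx
    rw [← hcoe]
    exact Subgroup.zpow_mem _ hmem m
  · intro hle
    exact hle γ.2

end Helpers

theorem cyclic_aux (G : Type*) [Group G] [Fintype G] [IsCyclic G] :
    ∀ (n : ℕ) (A B : Type*) [MulAction G A] [MulAction G B] [Fintype A] [Fintype B],
      Nat.card A ≤ n →
      (∀ g : G, Nat.card {a : A | g • a = a} = Nat.card {b : B | g • b = b}) →
      ∃ e : A ≃ B, ∀ (g : G) (a : A), e (g • a) = g • e a := by
  intro n
  induction n with
  | zero =>
    intro A B _ _ _ _ hcard h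
    have hAB : Nat.card A = Nat.card B := by
      have h1 := h 1
      rw [show {a : A | (1 : G) • a = a} = Set.univ from by ext x; simp,
        show {b : B | (1 : G) • b = b} = Set.univ from by ext x; simp,
        Nat.card_univ, Nat.card_univ] at h1
      exact h1
    haveI : IsEmpty A := by
      have h0 : Nat.card A = 0 := Nat.le_zero.mp hcard
      rw [Nat.card_eq_fintype_card] at h0
      exact Fintype.card_eq_zero_iff.mp h0
    haveI : IsEmpty B := by
      have h0 : Nat.card B = 0 := by rw [← hAB]; simp
      rw [Nat.card_eq_fintype_card] at h0
      exact Fintype.card_eq_zero_iff.mp h0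
    exact ⟨Equiv.equivOfIsEmpty A B, fun g a => isEmptyElim a⟩
  | succ n ih =>
    intro A B _ _ _ _ hcard h
    classical
    have hAB : Nat.card A = Nat.card B := by
      have h1 := h 1
      rw [show {a : A | (1 : G) • a = a} = Set.univ from by ext x; simp,
        show {b : B | (1 : G) • b = b} = Set.univ from by ext x; simp,
        Nat.card_univ, Nat.card_univ] at h1
      exact h1
    rcases isEmpty_or_nonempty A with hA | hA
    · haveI : IsEmpty B := by
        have h0 : Nat.card B = 0 := by rw [← hAB]; simp
        rw [Nat.card_eq_fintype_card] at h0
        exact Fintype.card_eq_zero_iff.mp h0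
      exact ⟨Equiv.equivOfIsEmpty A B, fun g a => isEmptyElim a⟩
    · obtain ⟨a1⟩ := hA
      set S : Set (Subgroup G) :=
        (Set.range fun a : A => stabilizer G a) ∪ (Set.range fun b : B => stabilizer G b)
        with hSdef
      have hSfin : S.Finite := (Set.finite_range _).union (Set.finite_range _)
      have hSne : S.Nonempty := ⟨stabilizer G a1, Or.inl ⟨a1, rfl⟩⟩
      obtain ⟨H, hHS, hmax⟩ := Set.Finite.exists_maximalFor id S hSfin hSne
      obtain ⟨γ, hγ⟩ := IsCyclic.exists_generator (α := H)
      have pair : ∃ (a0 : A) (b0 : B), stabilizer G a0 = H ∧ stabilizer G b0 = H := by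
        rcases hHS with ⟨a0, ha0⟩ | ⟨b0, hb0⟩
        · have hfixa : a0 ∈ {x : A | γ.1 • x = x} :=
            (gen_fix_iff H γ hγ a0).mpr (le_of_eq ha0.symm)
          haveI : Nonempty {x : A | γ.1 • x = x} := ⟨⟨a0, hfixa⟩⟩
          have hpos : 0 < Nat.card {x : A | γ.1 • x = x} := Nat.card_pos
          rw [h γ.1] at hpos
          obtain ⟨⟨b0, hb0⟩⟩ := (Nat.card_pos_iff.mp hpos).1
          have hle : H ≤ stabilizer G b0 := (gen_fix_iff H γ hγ b0).mp hb0
          have heq := le_antisymm hle (hmax (Or.inr ⟨b0, rfl⟩) hle)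
          exact ⟨a0, b0, ha0, heq.symm⟩
        · have hfixb : b0 ∈ {y : B | γ.1 • y = y} :=
            (gen_fix_iff H γ hγ b0).mpr (le_of_eq hb0.symm)
          haveI : Nonempty {y : B | γ.1 • y = y} := ⟨⟨b0, hfixb⟩⟩
          have hpos : 0 < Nat.card {y : B | γ.1 • y = y} := Nat.card_pos
          rw [← h γ.1] at hpos
          obtain ⟨⟨a0, ha0⟩⟩ := (Nat.card_pos_iff.mp hpos).1
          have hle : H ≤ stabilizer G a0 := (gen_fix_iff H γ hγ a0).mp ha0
          have heq := le_antisymm hle (hmax (Or.inl ⟨a0, rfl⟩) hle)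
          exact ⟨a0, b0, heq.symm, hb0⟩
      obtain ⟨a0, b0, ha0, hb0⟩ := pair
      obtain ⟨eo, heo⟩ := orbit_equiv a0 b0 (ha0.trans hb0.symm)
      have hfix' : ∀ g : G,
          Nat.card {x : ↥(complSub (orbitSub G a0)) | g • x = x} =
            Nat.card {x : ↥(complSub (orbitSub G b0)) | g • x = x} := by
        intro g
        have h1 := card_fix_split (orbitSub G a0) g
        have h2 := card_fix_split (orbitSub G b0) g
        have h3 := fixCard_congr eo heo g
        have h4 := h g
        omega
      have hlt : Nat.card ↥(complSub (orbitSub G a0)) < Nat.card A :=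
        Finite.card_subtype_lt (p := fun x => x ∈ complSub (orbitSub G a0)) (x := a0)
          (fun hmem => hmem (mem_orbit_self a0))
      obtain ⟨ec, hec⟩ := ih ↥(complSub (orbitSub G a0)) ↥(complSub (orbitSub G b0))
        (by omega) hfix'
      exact glue_equiv (orbitSub G a0) (orbitSub G b0) eo heo ec hec

/-- For a finite cyclic group `G`, two finite `G`-sets such that every element `g ∈ G` fixes
the same number of points in each are isomorphic as `G`-sets. (Hence for cyclic `G` the
natural map from the Burnside ring to the representation ring, which sends a `G`-set to the
space of functions on it — whose character at `g` is the number of `g`-fixed points — is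
injective.) -/
theorem cyclic_gset_iso_of_card_fixedBy_eq (G : Type*) [Group G] [Fintype G] [IsCyclic G]
    (A B : Type*) [MulAction G A] [MulAction G B] [Fintype A] [Fintype B]
    (h : ∀ g : G, Nat.card {a : A | g • a = a} = Nat.card {b : B | g • b = b}) :
    ∃ e : A ≃ B, ∀ (g : G) (a : A), e (g • a) = g • e a :=
  cyclic_aux G (Nat.card A) A B le_rfl h
end

section
/- Let G be a finite abelian group acting on a finite set A, and let k ≥ 0 be an integer. Then Σ_{(g_0, g_1, …, g_k) ∈ G^{k+1}} |A^{⟨g_0, g_1, …, g_k⟩}| = |G| · Σ_{ω ∈ A/G} |G_ω|^k, where the second sum runs over the G-orbits ω of A, G_ω denotes the stabilizer of any point of the orbit ω (which is well defined since G is abelian), ⟨g_0, …, g_k⟩ is the subgroup generated by g_0, …, g_k, and A^L is the L-fixed-point set. -/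
open MulAction Finset

/-- For a finite abelian group `G` acting on a finite set `A` and `k ≥ 0`, the sum over all
`(k+1)`-tuples `(g₀, …, g_k) ∈ G^{k+1}` of the number of points of `A` fixed by the subgroup
`⟨g₀, …, g_k⟩` equals `|G| · Σ_{ω ∈ A/G} |G_ω|^k`, where `G_ω` is the common stabilizer of
the points of the orbit `ω` (well defined since `G` is abelian). -/
theorem higher_order_euler_char_eq_sum_over_orbits (G : Type*) [CommGroup G] [Fintype G]
    (A : Type*) [MulAction G A] [Fintype A] (k : ℕ) :
    ∑ gs : Fin (k + 1) → G,
        Nat.card (MulAction.fixedPoints (Subgroup.closure (Set.range gs)) A) =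
      Nat.card G *
        ∑ᶠ ω : MulAction.orbitRel.Quotient G A,
          Nat.card {g : G | ∀ a ∈ ω.orbit, g • a = a} ^ k := by
  classical
  -- Step 1: fixedPoints of closure = points fixed by all generators
  have hset : ∀ gs : Fin (k+1) → G,
      fixedPoints (Subgroup.closure (Set.range gs)) A = {a : A | ∀ i, gs i • a = a} := by
    intro gs
    ext a
    simp only [Set.mem_setOf_eq, mem_fixedPoints]
    constructor
    · intro h i
      exact h ⟨gs i, Subgroup.subset_closure ⟨i, rfl⟩⟩
    · intro h g
      have hle : Subgroup.closure (Set.range gs) ≤ stabilizer G a := by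
        rw [Subgroup.closure_le]
        rintro _ ⟨i, rfl⟩
        exact h i
      exact hle g.2
  have h1 : ∀ gs : Fin (k+1) → G,
      Nat.card (fixedPoints (Subgroup.closure (Set.range gs)) A)
        = (univ.filter (fun a : A => ∀ i, gs i • a = a)).card := by
    intro gs
    rw [hset gs, Nat.card_eq_card_toFinset, Set.toFinset_setOf]
  -- Step 2: swap sums
  have h2 : ∑ gs : Fin (k + 1) → G,
      Nat.card (fixedPoints (Subgroup.closure (Set.range gs)) A)
      = ∑ a : A, Nat.card (stabilizer G a) ^ (k+1) := by
    calc ∑ gs : Fin (k + 1) → G,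
        Nat.card (fixedPoints (Subgroup.closure (Set.range gs)) A)
        = ∑ gs : Fin (k+1) → G, ∑ a : A, if ∀ i, gs i • a = a then 1 else 0 := by
          simp_rw [h1, Finset.sum_boole, Nat.cast_id]
      _ = ∑ a : A, ∑ gs : Fin (k+1) → G, if ∀ i, gs i • a = a then 1 else 0 :=
          Finset.sum_comm
      _ = ∑ a : A, Nat.card (stabilizer G a) ^ (k+1) := by
          refine Finset.sum_congr rfl fun a _ => ?_
          rw [Finset.sum_boole, Nat.cast_id]
          have : (univ.filter (fun gs : Fin (k+1) → G => ∀ i, gs i • a = a)).card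
              = Fintype.card {gs : Fin (k+1) → G // ∀ i, gs i • a = a} := by
            rw [Fintype.card_subtype]
          rw [this, Fintype.card_congr (Equiv.subtypePiEquivPi (p := fun _ g => g • a = a)),
            Fintype.card_pi]
          rw [Finset.prod_const, Finset.card_univ, Fintype.card_fin, Nat.card_eq_fintype_card]
          congr 1
  rw [h2]
  -- Step 3: group by orbits
  have : Fintype (orbitRel.Quotient G A) := Fintype.ofFinite _
  rw [finsum_eq_sum_of_fintype]
  -- stabilizer along an orbit
  have hstab : ∀ (ω : orbitRel.Quotient G A) (a : A), a ∈ ω.orbit →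
      {g : G | ∀ b ∈ ω.orbit, g • b = b} = (stabilizer G a : Set G) := by
    intro ω a ha
    ext g
    simp only [Set.mem_setOf_eq, SetLike.mem_coe, mem_stabilizer_iff]
    constructor
    · intro h; exact h a ha
    · intro h b hb
      have : b ∈ orbit G a := by
        rw [orbitRel.Quotient.mem_orbit] at ha hb
        rw [← ha] at hb
        exact Quotient.eq''.mp hb
      obtain ⟨h', rfl⟩ := this
      rw [smul_comm, h]
  rw [← Finset.sum_fiberwise (g := fun a : A => (Quotient.mk'' a : orbitRel.Quotient G A))
    (f := fun a => Nat.card (stabilizer G a) ^ (k+1)), Finset.mul_sum]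
  refine Finset.sum_congr rfl fun ω _ => ?_
  obtain ⟨a, ha⟩ := MulAction.orbitRel.Quotient.nonempty_orbit ω
  have hafix : ∀ b ∈ univ.filter (fun b : A => (Quotient.mk'' b : orbitRel.Quotient G A) = ω),
      Nat.card (stabilizer G b) ^ (k+1) = Nat.card (stabilizer G a) ^ (k+1) := by
    intro b hb
    simp only [mem_filter, mem_univ, true_and] at hb
    have hb' : b ∈ orbitRel.Quotient.orbit ω := orbitRel.Quotient.mem_orbit.mpr hb
    have hcoe : (stabilizer G b : Set G) = (stabilizer G a : Set G) := by
      rw [← hstab ω b hb', hstab ω a ha]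
    rw [SetLike.coe_injective hcoe]
  have hcard : (univ.filter (fun b : A => (Quotient.mk'' b : orbitRel.Quotient G A) = ω)).card
      = Nat.card (orbit G a) := by
    rw [Nat.card_eq_card_toFinset]
    congr 1
    ext b
    simp only [mem_filter, mem_univ, true_and, Set.mem_toFinset]
    rw [orbitRel.Quotient.mem_orbit] at ha
    rw [← ha, Quotient.eq'']
    exact Iff.rfl
  rw [Finset.sum_congr rfl hafix, Finset.sum_const, smul_eq_mul, hcard]
  have horb : Nat.card (orbit G a) * Nat.card (stabilizer G a) = Nat.card G := by
    simp only [Nat.card_eq_fintype_card]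
    exact card_orbit_mul_card_stabilizer_eq_card_group G a
  have hω : Nat.card {g : G | ∀ b ∈ orbitRel.Quotient.orbit ω, g • b = b}
      = Nat.card (stabilizer G a) := by
    rw [hstab ω a ha]
    rfl
  rw [hω]
  calc Nat.card (orbit G a) * Nat.card (stabilizer G a) ^ (k+1)
      = (Nat.card (orbit G a) * Nat.card (stabilizer G a)) * Nat.card (stabilizer G a) ^ k := by
        ring
    _ = Nat.card G * Nat.card (stabilizer G a) ^ k := by rw [horb]
end

section
/- Let G be a finite group acting on a finite set A and let k ≥ 0 be an integer. Then |G| divides Σ |A^{⟨g_0, g_1, …, g_k⟩}|, where the sum runs over all (k+1)-tuples (g_0, g_1, …, g_k) of elements of G that pairwise commute (g_i g_j = g_j g_i for all i, j), ⟨g_0, …, g_k⟩ is the subgroup of G generated by g_0, …, g_k, and A^L = {a ∈ A : la = a for all l ∈ L}. In other words, the k-th order Euler characteristic χ^{(k)}(A, G) = (1/|G|) Σ |A^{⟨g_0, …, g_k⟩}| is an integer. -/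
open MulAction Subgroup

private lemma mem_fixedPoints_closure_iff {G : Type*} [Group G] {A : Type*} [MulAction G A]
    {s : Set G} {a : A} :
    a ∈ fixedPoints (closure s) A ↔ ∀ g ∈ s, g • a = a := by
  constructor
  · intro h g hg
    exact h ⟨g, subset_closure hg⟩
  · intro h g
    obtain ⟨g, hg⟩ := g
    show g • a = a
    induction hg using closure_induction with
    | mem x hx => exact h x hx
    | one => exact one_smul G a
    | mul x y hx hy ihx ihy => rw [mul_smul, ihy, ihx]
    | inv x hx ih =>
        calc x⁻¹ • a = x⁻¹ • (x • a) := by rw [ih]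
        _ = a := inv_smul_smul x a

private abbrev CSys (G A : Type*) [Group G] [MulAction G A] (k : ℕ) : Type _ :=
  {p : (Fin k → G) × A // (∀ i j, Commute (p.1 i) (p.1 j)) ∧
    p.2 ∈ fixedPoints (closure (Set.range p.1)) A}

section Aux

variable {G : Type*} [Group G] {A : Type*} [MulAction G A] {k : ℕ}

private lemma csys_cond (g : G) (ts : Fin k → G) (a : A)
    (hc : ∀ i j, Commute (ts i) (ts j))
    (hf : a ∈ fixedPoints (closure (Set.range ts)) A) :
    (∀ i j, Commute (g * ts i * g⁻¹) (g * ts j * g⁻¹)) ∧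
      g • a ∈ fixedPoints (closure (Set.range fun i => g * ts i * g⁻¹)) A := by
  constructor
  · intro i j
    show (g * ts i * g⁻¹) * (g * ts j * g⁻¹) = (g * ts j * g⁻¹) * (g * ts i * g⁻¹)
    calc (g * ts i * g⁻¹) * (g * ts j * g⁻¹) = g * (ts i * ts j) * g⁻¹ := by group
    _ = g * (ts j * ts i) * g⁻¹ := by rw [(hc i j).eq]
    _ = (g * ts j * g⁻¹) * (g * ts i * g⁻¹) := by group
  · rw [mem_fixedPoints_closure_iff]
    rintro x ⟨i, rfl⟩
    have hi : ts i • a = a := mem_fixedPoints_closure_iff.mp hf (ts i) ⟨i, rfl⟩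
    calc (g * ts i * g⁻¹) • g • a = g • ts i • (g⁻¹ • g • a) := by
          simp only [mul_smul]
    _ = g • a := by rw [inv_smul_smul, hi]

private instance instSMulCSys : SMul G (CSys G A k) :=
  ⟨fun g p => ⟨(fun i => g * p.1.1 i * g⁻¹, g • p.1.2), csys_cond g _ _ p.2.1 p.2.2⟩⟩

private lemma csys_smul_val (g : G) (p : CSys G A k) :
    (g • p).1 = (fun i => g * p.1.1 i * g⁻¹, g • p.1.2) := rfl

private instance instMulActionCSys : MulAction G (CSys G A k) where
  one_smul p := Subtype.ext (by
    rw [csys_smul_val]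
    refine Prod.ext (funext fun i => by simp) (one_smul G _))
  mul_smul g h p := Subtype.ext (by
    simp only [csys_smul_val]
    refine Prod.ext (funext fun i => ?_) (mul_smul g h _)
    simp [mul_assoc])

private lemma tail_cond {gs : Fin (k + 1) → G} {a : A}
    (hc : ∀ i j, Commute (gs i) (gs j))
    (hf : a ∈ fixedPoints (closure (Set.range gs)) A) :
    (∀ i j, Commute (Fin.tail gs i) (Fin.tail gs j)) ∧
      a ∈ fixedPoints (closure (Set.range (Fin.tail gs))) A := by
  refine ⟨fun i j => hc i.succ j.succ, ?_⟩
  rw [mem_fixedPoints_closure_iff] at hf ⊢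
  rintro x ⟨i, rfl⟩
  exact hf _ ⟨i.succ, rfl⟩

private lemma head_fix {gs : Fin (k + 1) → G} {a : A}
    (hc : ∀ i j, Commute (gs i) (gs j))
    (hf : a ∈ fixedPoints (closure (Set.range gs)) A) :
    gs 0 • (⟨(Fin.tail gs, a), tail_cond hc hf⟩ : CSys G A k)
      = ⟨(Fin.tail gs, a), tail_cond hc hf⟩ := by
  refine Subtype.ext (Prod.ext (funext fun i => ?_) ?_)
  · show gs 0 * Fin.tail gs i * (gs 0)⁻¹ = Fin.tail gs i
    rw [mul_inv_eq_iff_eq_mul]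
    exact (hc 0 i.succ).eq
  · exact mem_fixedPoints_closure_iff.mp hf _ ⟨0, rfl⟩

private lemma cons_cond {g : G} {ts : Fin k → G} {a : A}
    (hc : ∀ i j, Commute (ts i) (ts j))
    (hf : a ∈ fixedPoints (closure (Set.range ts)) A)
    (hq : g • (⟨(ts, a), hc, hf⟩ : CSys G A k) = ⟨(ts, a), hc, hf⟩) :
    (∀ i j, Commute ((Fin.cons g ts : Fin (k + 1) → G) i) ((Fin.cons g ts : Fin (k + 1) → G) j)) ∧
      a ∈ fixedPoints (closure (Set.range (Fin.cons g ts : Fin (k + 1) → G))) A := by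
  have h1 : ∀ i, g * ts i * g⁻¹ = ts i :=
    fun i => congrFun (congrArg Prod.fst (congrArg Subtype.val hq)) i
  have h2 : g • a = a := congrArg Prod.snd (congrArg Subtype.val hq)
  have hcg : ∀ i, Commute g (ts i) := fun i => by
    have := h1 i; rwa [mul_inv_eq_iff_eq_mul] at this
  constructor
  · intro i j
    induction i using Fin.cases with
    | zero =>
        induction j using Fin.cases with
        | zero => simp only [Fin.cons_zero]; exact Commute.refl g
        | succ j => simpa only [Fin.cons_zero, Fin.cons_succ] using hcg j
    | succ i =>
        induction j using Fin.cases with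
        | zero => simpa only [Fin.cons_zero, Fin.cons_succ] using (hcg i).symm
        | succ j => simpa only [Fin.cons_succ] using hc i j
  · rw [mem_fixedPoints_closure_iff] at hf ⊢
    rintro x ⟨i, rfl⟩
    induction i using Fin.cases with
    | zero => simpa only [Fin.cons_zero] using h2
    | succ i => simpa only [Fin.cons_succ] using hf _ ⟨i, rfl⟩

/-- The key equivalence: commuting `(k+1)`-tuples together with a common fixed point
correspond to pairs `(g, x)` where `x : CSys G A k` and `g` fixes `x` under the
conjugation-plus-action of `G`. -/
private def consEquiv (G A : Type*) [Group G] [MulAction G A] (k : ℕ) :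
    {p : (Fin (k + 1) → G) × A // (∀ i j, Commute (p.1 i) (p.1 j)) ∧
        p.2 ∈ fixedPoints (closure (Set.range p.1)) A} ≃
      {q : G × CSys G A k // q.1 • q.2 = q.2} where
  toFun p := ⟨(p.1.1 0, ⟨(Fin.tail p.1.1, p.1.2), tail_cond p.2.1 p.2.2⟩),
    head_fix p.2.1 p.2.2⟩
  invFun q := ⟨(Fin.cons q.1.1 q.1.2.1.1, q.1.2.1.2),
    cons_cond q.1.2.2.1 q.1.2.2.2 q.2⟩
  left_inv p := Subtype.ext (Prod.ext (Fin.cons_self_tail p.1.1) rfl)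
  right_inv q := by
    obtain ⟨⟨g, ⟨⟨ts, a⟩, hc, hf⟩⟩, hq⟩ := q
    apply Subtype.ext
    refine Prod.ext ?_ ?_
    · show (Fin.cons g ts : Fin (k + 1) → G) 0 = g
      exact Fin.cons_zero _ _
    · apply Subtype.ext
      refine Prod.ext ?_ rfl
      show Fin.tail (Fin.cons g ts : Fin (k + 1) → G) = ts
      exact Fin.tail_cons (α := fun _ => G) g ts

end Aux

open scoped Classical in
/-- For a finite group `G` acting on a finite set `A` and `k ≥ 0`, the order `|G|` divides
the sum, over all pairwise commuting `(k+1)`-tuples `(g₀, …, g_k)` of elements of `G`, of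
the number of points of `A` fixed by the subgroup `⟨g₀, …, g_k⟩`; i.e. the `k`-th order
Euler characteristic `χ^{(k)}(A, G)` is an integer. -/
theorem card_dvd_sum_commuting_fixed_points (G : Type*) [Group G] [Fintype G]
    (A : Type*) [MulAction G A] [Fintype A] (k : ℕ) :
    Nat.card G ∣ ∑ gs : Fin (k + 1) → G,
      if ∀ i j, Commute (gs i) (gs j) then
        Nat.card (MulAction.fixedPoints (Subgroup.closure (Set.range gs)) A)
      else 0 := by
  classical
  have h1 : (∑ gs : Fin (k + 1) → G,
      if ∀ i j, Commute (gs i) (gs j) then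
        Nat.card (MulAction.fixedPoints (Subgroup.closure (Set.range gs)) A)
      else 0)
      = Fintype.card {p : (Fin (k + 1) → G) × A //
          (∀ i j, Commute (p.1 i) (p.1 j)) ∧
            p.2 ∈ fixedPoints (closure (Set.range p.1)) A} := by
    rw [Fintype.card_congr (Equiv.subtypeProdEquivSigmaSubtype
      (fun (gs : Fin (k + 1) → G) (a : A) => (∀ i j, Commute (gs i) (gs j)) ∧
        a ∈ fixedPoints (closure (Set.range gs)) A)), Fintype.card_sigma]
    refine Finset.sum_congr rfl fun gs _ => ?_
    by_cases h : ∀ i j, Commute (gs i) (gs j)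
    · rw [if_pos h, Nat.card_eq_fintype_card]
      exact Fintype.card_congr (Equiv.subtypeEquivRight fun a => (and_iff_right h).symm)
    · rw [if_neg h]
      exact (Fintype.card_eq_zero_iff.mpr ⟨fun x => h x.2.1⟩).symm
  rw [h1, Fintype.card_congr (consEquiv G A k),
    Fintype.card_congr (Equiv.subtypeProdEquivSigmaSubtype
      (fun (g : G) (x : CSys G A k) => g • x = x)), Fintype.card_sigma]
  have hb := MulAction.sum_card_fixedBy_eq_card_orbits_mul_card_group G (CSys G A k)
  have hcongr : ∀ g : G, Fintype.card {x : CSys G A k // g • x = x}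
      = Fintype.card (fixedBy (CSys G A k) g) := fun g =>
    Fintype.card_congr (Equiv.subtypeEquivRight fun x => Iff.rfl)
  rw [Finset.sum_congr rfl fun g _ => hcongr g, hb, Nat.card_eq_fintype_card]
  exact dvd_mul_left _ _
end
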